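/- Let P be a continuous function on a set S containing values on both sides of ū, with M' = max_{x∈S} P(x), m' = min_{x∈S} P(x), and m' ≤ ū ≤ M'. If m ≤ ū ≤ M, M' > ū, m' < ū, and θ = min((M−ū)/(M'−ū), (ū−m)/(ū−m'), 1), then the limited function P̃(x) = θ(P(x)−ū)+ū satisfies m ≤ P̃(x) ≤ M for all x ∈ S. -/
import Mathlib


/-- Key property of the Zhang–Shu a priori limiter: if `P` is continuous on `S`,
`M'` is the maximum and `m'` the minimum of `P` on `S`, with `m' < ū < M'`
(values on both sides of `ū`), and `m ≤ ū ≤ M`, then the limited function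
`P̃(x) = θ(P(x) - ū) + ū` with
`θ = min((M - ū)/(M' - ū), (ū - m)/(ū - m'), 1)` satisfies `m ≤ P̃(x) ≤ M` on `S`. -/
theorem zhang_shu_limited_values_in_bounds
    (S : Set ℝ) (P : ℝ → ℝ) (hP : ContinuousOn P S)
    (ubar m M m' M' : ℝ)
    (hM' : IsGreatest (P '' S) M') (hm' : IsLeast (P '' S) m')
    (hm'le : m' ≤ ubar) (hleM' : ubar ≤ M')
    (hm : m ≤ ubar) (hM : ubar ≤ M)
    (hMgt : M' > ubar) (hmlt : m' < ubar) :
    ∀ x ∈ S,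
      m ≤ min (min ((M - ubar) / (M' - ubar)) ((ubar - m) / (ubar - m'))) 1
            * (P x - ubar) + ubar ∧
      min (min ((M - ubar) / (M' - ubar)) ((ubar - m) / (ubar - m'))) 1
            * (P x - ubar) + ubar ≤ M := by
  intro x hx
  set θ := min (min ((M - ubar) / (M' - ubar)) ((ubar - m) / (ubar - m'))) 1 with hθ
  have hMd : (0:ℝ) < M' - ubar := by linarith
  have hmd : (0:ℝ) < ubar - m' := by linarith
  have hθ0 : 0 ≤ θ := le_min (le_min (div_nonneg (by linarith) hMd.le)
    (div_nonneg (by linarith) hmd.le)) zero_le_one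
  have hθa : θ ≤ (M - ubar) / (M' - ubar) := le_trans (min_le_left _ _) (min_le_left _ _)
  have hθb : θ ≤ (ubar - m) / (ubar - m') := le_trans (min_le_left _ _) (min_le_right _ _)
  have hPle : P x ≤ M' := hM'.2 ⟨x, hx, rfl⟩
  have hPge : m' ≤ P x := hm'.2 ⟨x, hx, rfl⟩
  have ha : θ * (M' - ubar) ≤ M - ubar := (le_div_iff₀ hMd).mp hθa
  have hb : θ * (ubar - m') ≤ ubar - m := (le_div_iff₀ hmd).mp hθb
  rcases le_total (P x) ubar with h | h
  · constructor
    · nlinarith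
    · nlinarith [mul_nonpos_of_nonneg_of_nonpos hθ0 (by linarith : P x - ubar ≤ 0)]
  · constructor
    · nlinarith [mul_nonneg hθ0 (by linarith : (0:ℝ) ≤ P x - ubar)]
    · nlinarith
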